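/- Let sequences of differentiable functions $r_n(t)$, $R_n(t)$ and scalars $\beta_n$ satisfy, for all $n\ge 0$: $r_{n+1}+r_n=\gamma+(t-\alpha_n)R_n$ and $(t-\alpha_n)(r_{n+1}-r_n)=\beta_{n+1}R_{n+1}-\beta_n R_{n-1}$, with initial data $r_0=0$ and $\beta_0 R_{-1}=0$. Then for all $n\ge 1$: $r_n^2-\gamma r_n=\beta_n R_n R_{n-1}$. -/
import Mathlib

/-- Telescoping identity `r_n² - γ r_n = β_n R_n R_{n-1}` from the string equations. -/
theorem stmt_5 (r R α β : ℕ → ℝ) (γ t : ℝ)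
    (hr0 : r 0 = 0) (hβ0 : β 0 = 0)
    (h1 : ∀ n : ℕ, r (n + 1) + r n = γ + (t - α n) * R n)
    (h2 : ∀ n : ℕ, (t - α n) * (r (n + 1) - r n)
        = β (n + 1) * R (n + 1) - β n * R (n - 1)) :
    ∀ n : ℕ, 1 ≤ n → (r n) ^ 2 - γ * r n = β n * R n * R (n - 1) := by
  have step : ∀ m : ℕ, (r (m+1))^2 - γ * r (m+1) - ((r m)^2 - γ * r m)
      = β (m+1) * R (m+1) * R m - β m * R m * R (m-1) := by
    intro m
    have e1 := h1 m
    have e2 := h2 m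
    linear_combination (r (m + 1) - r m) * e1 + R m * e2
  intro n hn
  induction n with
  | zero => omega
  | succ k ih =>
    rcases Nat.eq_zero_or_pos k with hk | hk
    · subst hk
      have s := step 0
      simp only [hr0, hβ0, Nat.add_sub_cancel] at s ⊢
      linarith
    · have ihk := ih hk
      have s := step k
      simp only [Nat.add_sub_cancel] at s ⊢
      linarith
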